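/- Let V be a finite-dimensional real or complex Hilbert space, G ≤ Aut(V) a finite group of linear isometries, and v₁, …, v_k ∈ V (k ≥ 3) points such that |Gv_j| = |G| for all j and such that for each 2 ≤ j ≤ k, every permutation of Gv₁ ∪ Gv_j extending to a linear isometry of V equals the restriction of a (necessarily unique) element of G. Then every permutation of Gv₁ ∪ ⋯ ∪ Gv_k that extends to a linear isometry of V and maps each orbit Gv_j to itself equals the restriction of a unique element of G; hence the canonical map G → Aut(Gv₁ ∪ ⋯ ∪ Gv_k) is an isomorphism. -/

import Mathlib

/-- Multi-orbit theorem, inductive step (`k ≥ 3`): if each pair of orbits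
`Gv₁ ∪ Gv_j` has all its isometric symmetries induced by `G`, the orbits are
pairwise disjoint and of size `|G|`, then every permutation of `Gv₁ ∪ ⋯ ∪ Gv_k`
extending to a linear isometry and preserving each orbit is induced by a unique
element of `G`; hence the canonical map `G → Aut(Gv₁ ∪ ⋯ ∪ Gv_k)` is an
isomorphism. -/
theorem stmt_18 (𝕜 : Type*) [RCLike 𝕜] (V : Type*) [NormedAddCommGroup V]
    [InnerProductSpace 𝕜 V] [FiniteDimensional 𝕜 V]
    (G : Subgroup (V ≃ₗᵢ[𝕜] V)) [Finite G] (k : ℕ) (hk : 3 ≤ k)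
    (v : Fin k → V) (S : Fin k → Set V)
    (hS : ∀ j, S j = Set.range fun g : G => (g : V ≃ₗᵢ[𝕜] V) (v j))
    (hcard : ∀ j, (S j).ncard = Nat.card G)
    (hdisj : ∀ i j, i ≠ j → Disjoint (S i) (S j))
    (hpair : ∀ j : Fin k, j ≠ (⟨0, by omega⟩ : Fin k) →
      ∀ σ : Equiv.Perm (S (⟨0, by omega⟩ : Fin k) ∪ S j : Set V),
        (∃ M : V ≃ₗᵢ[𝕜] V, ∀ x : (S (⟨0, by omega⟩ : Fin k) ∪ S j : Set V), (σ x : V) = M x) →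
        ∃ g : G, ∀ x : (S (⟨0, by omega⟩ : Fin k) ∪ S j : Set V), (σ x : V) = (g : V ≃ₗᵢ[𝕜] V) x) :
    ∀ σ : Equiv.Perm (⋃ j, S j : Set V),
      (∃ M : V ≃ₗᵢ[𝕜] V, ∀ x : (⋃ j, S j : Set V), (σ x : V) = M x) →
      (∀ (j : Fin k) (x : (⋃ j, S j : Set V)), (x : V) ∈ S j → (σ x : V) ∈ S j) →
      ∃! g : G, ∀ x : (⋃ j, S j : Set V), (σ x : V) = (g : V ≃ₗᵢ[𝕜] V) x := by
  intro σ ⟨M, hM⟩ hpres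
  set i0 : Fin k := ⟨0, by omega⟩ with hi0
  -- evaluation at v i0 is injective on G
  have hSfin : ∀ j, (S j).Finite := by
    intro j; rw [hS j]; exact Set.finite_range _
  have inj_f : Function.Injective (fun g : G => (g : V ≃ₗᵢ[𝕜] V) (v i0)) := by
    have hcard0 : Nat.card (Set.range fun g : G => (g : V ≃ₗᵢ[𝕜] V) (v i0)) = Nat.card G := by
      rw [Nat.card_coe_set_eq, ← hS i0, hcard i0]
    set f : G → V := fun g : G => (g : V ≃ₗᵢ[𝕜] V) (v i0) with hf
    have hbij : Function.Bijective (Set.rangeFactorization f) :=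
      (Nat.bijective_iff_surjective_and_card _).2
        ⟨Set.rangeFactorization_surjective, hcard0.symm⟩
    intro a b hab
    exact hbij.1 (Subtype.ext hab)
  have hv0 : v i0 ∈ S i0 := by
    rw [hS i0]; exact ⟨1, by simp⟩
  have hv0U : v i0 ∈ ⋃ j, S j := Set.mem_iUnion.2 ⟨i0, hv0⟩
  -- for each j ≠ i0, get a group element agreeing with σ on S i0 ∪ S j
  have key : ∀ j : Fin k, j ≠ i0 → ∃ g : G,
      ∀ x : (⋃ j, S j : Set V), (x : V) ∈ S i0 ∪ S j → (σ x : V) = (g : V ≃ₗᵢ[𝕜] V) x := by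
    intro j hj
    have hsub : (S i0 ∪ S j : Set V) ⊆ ⋃ j, S j :=
      Set.union_subset (Set.subset_iUnion S i0) (Set.subset_iUnion S j)
    have hmap : ∀ x : (S i0 ∪ S j : Set V), (σ ⟨x, hsub x.2⟩ : V) ∈ (S i0 ∪ S j : Set V) := by
      rintro ⟨x, hx | hx⟩
      · exact Or.inl (hpres i0 ⟨x, hsub (Or.inl hx)⟩ hx)
      · exact Or.inr (hpres j ⟨x, hsub (Or.inr hx)⟩ hx)
    have : Finite (S i0 ∪ S j : Set V) := ((hSfin i0).union (hSfin j)).to_subtype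
    set τ : (S i0 ∪ S j : Set V) → (S i0 ∪ S j : Set V) :=
      fun x => ⟨σ ⟨x, hsub x.2⟩, hmap x⟩ with hτ
    have hτinj : Function.Injective τ := by
      intro a b hab
      have h0 := congrArg Subtype.val hab
      have h1 := σ.injective (Subtype.ext h0)
      have h2 := congrArg Subtype.val h1
      exact Subtype.ext h2
    have hτbij : Function.Bijective τ := Finite.injective_iff_bijective.1 hτinj
    obtain ⟨g, hg⟩ := hpair j hj (Equiv.ofBijective τ hτbij)
      ⟨M, fun x => hM ⟨x, hsub x.2⟩⟩
    refine ⟨g, fun x hx => ?_⟩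
    have := hg ⟨x, hx⟩
    simpa [Equiv.ofBijective, hτ] using this
  set i1 : Fin k := ⟨1, by omega⟩ with hi1
  have hi1ne : i1 ≠ i0 := by simp [hi1, hi0, Fin.ext_iff]
  obtain ⟨g, hg⟩ := key i1 hi1ne
  have hgv0 : (σ ⟨v i0, hv0U⟩ : V) = (g : V ≃ₗᵢ[𝕜] V) (v i0) :=
    hg ⟨v i0, hv0U⟩ (Or.inl hv0)
  have hall : ∀ x : (⋃ j, S j : Set V), (σ x : V) = (g : V ≃ₗᵢ[𝕜] V) x := by
    rintro ⟨x, hx⟩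
    obtain ⟨j, hxj⟩ := Set.mem_iUnion.1 hx
    by_cases hje : j = i0
    · exact hg ⟨x, hx⟩ (Or.inl (hje ▸ hxj))
    · obtain ⟨g', hg'⟩ := key j hje
      have h1 : g' = g := by
        apply inj_f
        have e1 := hg' ⟨v i0, hv0U⟩ (Or.inl hv0)
        exact e1.symm.trans hgv0
      have := hg' ⟨x, hx⟩ (Or.inr hxj)
      rwa [h1] at this
  refine ⟨g, hall, fun g' hg' => ?_⟩
  apply inj_f
  exact ((hg' ⟨v i0, hv0U⟩).symm.trans hgv0)
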